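/- The language IP_* is context-free but does not belong to 1PLIN/lin; that is, IP_* is a context-free language, and for every finite advice alphabet Γ, every advice function h : ℕ → Γ* with |h(n)| = n, and every rational 1pfa M over the alphabet {0,1} × Γ, it is not the case that for all x ∈ {0,1}*: x ∈ IP_* if and only if p_acc([x//h(|x|)]) > 1/2. Hence CFL ⊄ 1PLIN/lin. -/

import Mathlib

open scoped BigOperators

/-- A rational one-way probabilistic finite automaton over alphabet `Λ`
(with endmarker matrices `matC` for ¢ and `matD` for $). -/
structure PFA (Λ : Type) where
  Q : Type
  fin : Fintype Q
  dec : DecidableEq Q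
  start : Q
  final : Finset Q
  matC : Matrix Q Q ℚ
  matD : Matrix Q Q ℚ
  mat : Λ → Matrix Q Q ℚ
  nonnegC : ∀ i j, 0 ≤ matC i j
  nonnegD : ∀ i j, 0 ≤ matD i j
  nonnegMat : ∀ σ i j, 0 ≤ mat σ i j
  rowC : ∀ i, ∑ j ∈ fin.elems, matC i j = 1
  rowD : ∀ i, ∑ j ∈ fin.elems, matD i j = 1
  rowMat : ∀ σ i, ∑ j ∈ fin.elems, mat σ i j = 1

/-- Acceptance probability of a 1pfa on an input string. -/
def PFA.accProb {Λ : Type} (M : PFA Λ) (x : List Λ) : ℚ :=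
  letI := M.fin
  letI := M.dec
  ∑ q ∈ M.final,
    (Matrix.vecMul
      (x.foldl (fun v σ => Matrix.vecMul v (M.mat σ))
        (Matrix.vecMul (Pi.single M.start 1) M.matC))
      M.matD) q

/-- `D` is a probability distribution on `Γ^n`. -/
def IsDist {Γ : Type} [Fintype Γ] {n : ℕ} (D : List.Vector Γ n → ℝ) : Prop :=
  (∀ y, 0 ≤ D y) ∧ ∑ y, D y = 1

open Classical in
/-- Probability, under randomized advice `D`, that the track string `[x//y]` lies in `L`. -/
noncomputable def randAccProb {Alp Γ : Type} [Fintype Γ] (L : Set (List (Alp × Γ)))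
    {n : ℕ} (D : List.Vector Γ n → ℝ) (x : List Alp) : ℝ :=
  ∑ y : List.Vector Γ n, if x.zip y.toList ∈ L then D y else 0

/-- `S ∈ REG/n`. -/
def InREGn {Alp : Type} (S : Set (List Alp)) : Prop :=
  ∃ (Γ : Type) (_ : Fintype Γ) (h : ℕ → List Γ), (∀ n, (h n).length = n) ∧
    ∃ (Q : Type) (_ : Fintype Q) (M : DFA (Alp × Γ) Q),
      ∀ x : List Alp, x ∈ S ↔ x.zip (h x.length) ∈ M.accepts

/-- `S ∈ REG/Rn` (bounded error, randomized advice). -/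
def InREGRn {Alp : Type} (S : Set (List Alp)) : Prop :=
  ∃ (Γ : Type) (iΓ : Fintype Γ),
    letI := iΓ
    ∃ (Q : Type) (_ : Fintype Q) (M : DFA (Alp × Γ) Q) (ε : ℝ),
      0 ≤ ε ∧ ε < 1 / 2 ∧
        ∃ D : (n : ℕ) → List.Vector Γ n → ℝ, (∀ n, IsDist (D n)) ∧
          ∀ (n : ℕ) (x : List Alp), x.length = n →
            (x ∈ S → 1 - ε ≤ randAccProb M.accepts (D n) x) ∧
            (x ∉ S → randAccProb M.accepts (D n) x ≤ ε)

/-- `S ∈ CFL/n`. -/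
def InCFLn {Alp : Type} (S : Set (List Alp)) : Prop :=
  ∃ (Γ : Type) (_ : Fintype Γ) (h : ℕ → List Γ), (∀ n, (h n).length = n) ∧
    ∃ L : Language (Alp × Γ), L.IsContextFree ∧
      ∀ x : List Alp, x ∈ S ↔ x.zip (h x.length) ∈ L

/-- `S ∈ CFL/Rn` (bounded error, randomized advice). -/
def InCFLRn {Alp : Type} (S : Set (List Alp)) : Prop :=
  ∃ (Γ : Type) (iΓ : Fintype Γ),
    letI := iΓ
    ∃ (L : Language (Alp × Γ)), L.IsContextFree ∧
      ∃ (ε : ℝ), 0 ≤ ε ∧ ε < 1 / 2 ∧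
        ∃ D : (n : ℕ) → List.Vector Γ n → ℝ, (∀ n, IsDist (D n)) ∧
          ∀ (n : ℕ) (x : List Alp), x.length = n →
            (x ∈ S → 1 - ε ≤ randAccProb L (D n) x) ∧
            (x ∉ S → randAccProb L (D n) x ≤ ε)

/-- `A ∈ 1C=LIN/lin` via the paper's 1pfa characterization. -/
def InOneCeqLin {Alp : Type} (A : Set (List Alp)) : Prop :=
  ∃ (Γ : Type) (_ : Fintype Γ) (h : ℕ → List Γ), (∀ n, (h n).length = n) ∧
    ∃ M : PFA (Alp × Γ),
      ∀ x : List Alp, x ∈ A ↔ M.accProb (x.zip (h x.length)) = 1 / 2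

/-- `A ∈ 1PLIN/lin` via the paper's 1pfa characterization. -/
def InOnePLin {Alp : Type} (A : Set (List Alp)) : Prop :=
  ∃ (Γ : Type) (_ : Fintype Γ) (h : ℕ → List Γ), (∀ n, (h n).length = n) ∧
    ∃ M : PFA (Alp × Γ),
      ∀ x : List Alp, x ∈ A ↔ 1 / 2 < M.accProb (x.zip (h x.length))

open Classical in
/-- `(A, μ) ∈ aver-REG/n`. -/
def InAverREGn {Alp : Type} [Fintype Alp] (A : Set (List Alp))
    (μ : (n : ℕ) → List.Vector Alp n → ℝ) : Prop :=
  ∃ (Γ : Type) (_ : Fintype Γ) (h : ℕ → List Γ), (∀ n, (h n).length = n) ∧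
    ∃ (Q : Type) (_ : Fintype Q) (M : DFA (Alp × Γ) Q) (ε : ℝ),
      0 ≤ ε ∧ ε < 1 / 2 ∧
        ∀ n : ℕ, 1 - ε ≤ ∑ x : List.Vector Alp n,
          if (x.toList.zip (h n) ∈ M.accepts ↔ x.toList ∈ A) then μ n x else 0

/-- The language `Dup = {ww : w ∈ {0,1}*}`. -/
def Dup : Set (List Bool) := {z | ∃ w : List Bool, z = w ++ w}

/-- The marked palindrome language `Pal_# = {w#w^R}` over the alphabet
`Option Bool` (with `none` playing the role of the marker `#`). -/
def PalHash : Set (List (Option Bool)) :=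
  {z | ∃ w : List Bool, z = w.map some ++ none :: (w.reverse.map some)}

/-- Inner product (number of common `true` positions) of two bit strings. -/
def innerProd (u v : List Bool) : ℕ :=
  ((u.zip v).filter fun p => p.1 && p.2).length

/-- The language `IP_* = {axy : a ∈ {λ,0,1}, |x| = |y|, x^R ⊙ y ≡ 0 (mod 2)}`. -/
def IPstar : Language Bool :=
  {z | ∃ a x y : List Bool, (a = [] ∨ a = [false] ∨ a = [true]) ∧
    z = a ++ x ++ y ∧ x.length = y.length ∧ innerProd x.reverse y % 2 = 0}

/-- A negligible function. -/
def Negligible (f : ℕ → ℝ) : Prop :=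
  ∀ k : ℕ, 0 < k → ∃ N : ℕ, ∀ n ≥ N, f n ≤ 1 / (n : ℝ) ^ k

/-- `L` is `REG/n`-pseudorandom. -/
def RegPseudorandom {Alp : Type} [Fintype Alp] (L : Set (List Alp)) : Prop :=
  ∀ B : Set (List Alp), InREGn B →
    Negligible fun n =>
      |(((symmDiff B L) ∩ {x | x.length = n}).ncard : ℝ) /
        (Fintype.card Alp : ℝ) ^ n - 1 / 2|

/-! ### `IPstar` is context-free -/

section Part1

/-- Nonterminals of the grammar for `IPstar`. -/
inductive IPNT : Type
  | S : IPNT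
  | E : IPNT
  | O : IPNT
deriving DecidableEq

deriving instance DecidableEq for Symbol
deriving instance DecidableEq for ContextFreeRule

/-- The production rules of the grammar for `IPstar`. -/
def ipRules : List (ContextFreeRule Bool IPNT) :=
  [⟨.S, [.nonterminal .E]⟩,
   ⟨.S, [.terminal false, .nonterminal .E]⟩,
   ⟨.S, [.terminal true, .nonterminal .E]⟩,
   ⟨.E, []⟩,
   ⟨.E, [.terminal false, .nonterminal .E, .terminal false]⟩,
   ⟨.E, [.terminal false, .nonterminal .E, .terminal true]⟩,
   ⟨.E, [.terminal true, .nonterminal .E, .terminal false]⟩,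
   ⟨.E, [.terminal true, .nonterminal .O, .terminal true]⟩,
   ⟨.O, [.terminal false, .nonterminal .O, .terminal false]⟩,
   ⟨.O, [.terminal false, .nonterminal .O, .terminal true]⟩,
   ⟨.O, [.terminal true, .nonterminal .O, .terminal false]⟩,
   ⟨.O, [.terminal true, .nonterminal .E, .terminal true]⟩]

/-- The grammar for `IPstar`. -/
abbrev ipG : ContextFreeGrammar Bool := ⟨IPNT, .S, ipRules.toFinset⟩

/-- Words `x ++ y` with `|x| = |y|` and even inner product `x.reverse ⊙ y`. -/
def LEv : Language Bool :=
  {z | ∃ x y : List Bool, z = x ++ y ∧ x.length = y.length ∧ innerProd x.reverse y % 2 = 0}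

/-- Words `x ++ y` with `|x| = |y|` and odd inner product `x.reverse ⊙ y`. -/
def LOd : Language Bool :=
  {z | ∃ x y : List Bool, z = x ++ y ∧ x.length = y.length ∧ innerProd x.reverse y % 2 = 1}

/-- Semantics of a symbol. -/
def ipSem : Symbol Bool IPNT → Language Bool
  | .terminal b => {[b]}
  | .nonterminal .S => IPstar
  | .nonterminal .E => LEv
  | .nonterminal .O => LOd

/-- Semantics of a sentential form. -/
def ipSemL (l : List (Symbol Bool IPNT)) : Language Bool := (l.map ipSem).prod

lemma ipSemL_append (l1 l2 : List (Symbol Bool IPNT)) :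
    ipSemL (l1 ++ l2) = ipSemL l1 * ipSemL l2 := by
  simp [ipSemL]

lemma ipSemL_cons (s : Symbol Bool IPNT) (l : List (Symbol Bool IPNT)) :
    ipSemL (s :: l) = ipSem s * ipSemL l := by
  simp [ipSemL]

lemma ipSemL_single (s : Symbol Bool IPNT) : ipSemL [s] = ipSem s := by
  simp [ipSemL]

lemma innerProd_nil' : innerProd [] [] = 0 := rfl

lemma innerProd_append_snoc (a b : Bool) (x y : List Bool) (h : x.length = y.length) :
    innerProd (x ++ [a]) (y ++ [b]) = innerProd x y + (if a && b then 1 else 0) := by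
  simp only [innerProd, List.zip_append h, List.filter_append, List.length_append]
  congr 1
  cases hab : (a && b) <;> simp [List.zip, hab]

lemma innerProd_rev_cons_snoc (a b : Bool) (x y : List Bool) (h : x.length = y.length) :
    innerProd (a :: x).reverse (y ++ [b])
      = innerProd x.reverse y + (if a && b then 1 else 0) := by
  rw [List.reverse_cons, innerProd_append_snoc _ _ _ _ (by simp [h])]

/-- Unpack membership in `{[a]} * (L * {[b]})`. -/
lemma mem_sandwich {a b : Bool} {L : Language Bool} {z : List Bool}
    (hz : z ∈ ({[a]} : Language Bool) * (L * ({[b]} : Language Bool))) :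
    ∃ w ∈ L, z = a :: (w ++ [b]) := by
  obtain ⟨u, hu, z2, hz2, rfl⟩ := Language.mem_mul.mp hz
  obtain ⟨w, hw, v, hv, rfl⟩ := Language.mem_mul.mp hz2
  change u = [a] at hu; change v = [b] at hv
  subst hu; subst hv
  exact ⟨w, hw, rfl⟩

lemma cons_snoc_mem_LEv {a b : Bool} {w : List Bool}
    (h : ((a && b) = false ∧ w ∈ LEv) ∨ ((a && b) = true ∧ w ∈ LOd)) :
    a :: (w ++ [b]) ∈ LEv := by
  rcases h with ⟨hab, x, y, rfl, hlen, hpar⟩ | ⟨hab, x, y, rfl, hlen, hpar⟩ <;>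
    refine ⟨a :: x, y ++ [b], by simp, by simp [hlen], ?_⟩ <;>
    rw [innerProd_rev_cons_snoc a b x y hlen, hab] <;> simp <;> omega

lemma cons_snoc_mem_LOd {a b : Bool} {w : List Bool}
    (h : ((a && b) = false ∧ w ∈ LOd) ∨ ((a && b) = true ∧ w ∈ LEv)) :
    a :: (w ++ [b]) ∈ LOd := by
  rcases h with ⟨hab, x, y, rfl, hlen, hpar⟩ | ⟨hab, x, y, rfl, hlen, hpar⟩ <;>
    refine ⟨a :: x, y ++ [b], by simp, by simp [hlen], ?_⟩ <;>
    rw [innerProd_rev_cons_snoc a b x y hlen, hab] <;> simp <;> omega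

lemma LEv_mem_IPstar {z : List Bool} (hz : z ∈ LEv) : z ∈ IPstar := by
  obtain ⟨x, y, rfl, hlen, hpar⟩ := hz
  exact ⟨[], x, y, Or.inl rfl, rfl, hlen, hpar⟩

lemma cons_LEv_mem_IPstar (b : Bool) {z : List Bool} (hz : z ∈ LEv) : b :: z ∈ IPstar := by
  obtain ⟨x, y, rfl, hlen, hpar⟩ := hz
  refine ⟨[b], x, y, ?_, by simp, hlen, hpar⟩
  cases b
  · exact Or.inr (Or.inl rfl)
  · exact Or.inr (Or.inr rfl)

lemma ruleSound : ∀ r ∈ ipG.rules, ipSemL r.output ≤ ipSem (Symbol.nonterminal r.input) := by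
  intro r hr
  have hr' : r ∈ ipRules := List.mem_toFinset.mp hr
  simp only [ipRules, List.mem_cons, List.not_mem_nil, or_false] at hr'
  rcases hr' with rfl | rfl | rfl | rfl | rfl | rfl | rfl | rfl | rfl | rfl | rfl | rfl
  · rw [ipSemL_single]
    exact fun z hz => LEv_mem_IPstar hz
  · intro z hz
    rw [show ipSemL [.terminal false, .nonterminal .E] =
      ({[false]} : Language Bool) * (LEv * 1) by simp [ipSemL, ipSem]] at hz
    rw [mul_one] at hz
    obtain ⟨u, hu, w, hw, rfl⟩ := Language.mem_mul.mp hz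
    change u = [false] at hu; subst hu
    exact cons_LEv_mem_IPstar false hw
  · intro z hz
    rw [show ipSemL [.terminal true, .nonterminal .E] =
      ({[true]} : Language Bool) * (LEv * 1) by simp [ipSemL, ipSem]] at hz
    rw [mul_one] at hz
    obtain ⟨u, hu, w, hw, rfl⟩ := Language.mem_mul.mp hz
    change u = [true] at hu; subst hu
    exact cons_LEv_mem_IPstar true hw
  · intro z hz
    rw [show ipSemL [] = 1 by simp [ipSemL]] at hz
    replace hz : z = [] := (Language.mem_one z).mp hz
    subst hz
    exact ⟨[], [], rfl, rfl, rfl⟩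
  · intro z hz
    rw [show ipSemL [.terminal false, .nonterminal .E, .terminal false] =
      ({[false]} : Language Bool) * (LEv * ({[false]} * 1)) by simp [ipSemL, ipSem]] at hz
    rw [mul_one] at hz
    obtain ⟨w, hw, rfl⟩ := mem_sandwich hz
    exact cons_snoc_mem_LEv (Or.inl ⟨rfl, hw⟩)
  · intro z hz
    rw [show ipSemL [.terminal false, .nonterminal .E, .terminal true] =
      ({[false]} : Language Bool) * (LEv * ({[true]} * 1)) by simp [ipSemL, ipSem]] at hz
    rw [mul_one] at hz
    obtain ⟨w, hw, rfl⟩ := mem_sandwich hz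
    exact cons_snoc_mem_LEv (Or.inl ⟨rfl, hw⟩)
  · intro z hz
    rw [show ipSemL [.terminal true, .nonterminal .E, .terminal false] =
      ({[true]} : Language Bool) * (LEv * ({[false]} * 1)) by simp [ipSemL, ipSem]] at hz
    rw [mul_one] at hz
    obtain ⟨w, hw, rfl⟩ := mem_sandwich hz
    exact cons_snoc_mem_LEv (Or.inl ⟨rfl, hw⟩)
  · intro z hz
    rw [show ipSemL [.terminal true, .nonterminal .O, .terminal true] =
      ({[true]} : Language Bool) * (LOd * ({[true]} * 1)) by simp [ipSemL, ipSem]] at hz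
    rw [mul_one] at hz
    obtain ⟨w, hw, rfl⟩ := mem_sandwich hz
    exact cons_snoc_mem_LEv (Or.inr ⟨rfl, hw⟩)
  · intro z hz
    rw [show ipSemL [.terminal false, .nonterminal .O, .terminal false] =
      ({[false]} : Language Bool) * (LOd * ({[false]} * 1)) by simp [ipSemL, ipSem]] at hz
    rw [mul_one] at hz
    obtain ⟨w, hw, rfl⟩ := mem_sandwich hz
    exact cons_snoc_mem_LOd (Or.inl ⟨rfl, hw⟩)
  · intro z hz
    rw [show ipSemL [.terminal false, .nonterminal .O, .terminal true] =
      ({[false]} : Language Bool) * (LOd * ({[true]} * 1)) by simp [ipSemL, ipSem]] at hz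
    rw [mul_one] at hz
    obtain ⟨w, hw, rfl⟩ := mem_sandwich hz
    exact cons_snoc_mem_LOd (Or.inl ⟨rfl, hw⟩)
  · intro z hz
    rw [show ipSemL [.terminal true, .nonterminal .O, .terminal false] =
      ({[true]} : Language Bool) * (LOd * ({[false]} * 1)) by simp [ipSemL, ipSem]] at hz
    rw [mul_one] at hz
    obtain ⟨w, hw, rfl⟩ := mem_sandwich hz
    exact cons_snoc_mem_LOd (Or.inl ⟨rfl, hw⟩)
  · intro z hz
    rw [show ipSemL [.terminal true, .nonterminal .E, .terminal true] =
      ({[true]} : Language Bool) * (LEv * ({[true]} * 1)) by simp [ipSemL, ipSem]] at hz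
    rw [mul_one] at hz
    obtain ⟨w, hw, rfl⟩ := mem_sandwich hz
    exact cons_snoc_mem_LOd (Or.inr ⟨rfl, hw⟩)

lemma produces_le {u v : List (Symbol Bool IPNT)} (h : ipG.Produces u v) :
    ipSemL v ≤ ipSemL u := by
  obtain ⟨r, hr, hrw⟩ := h
  obtain ⟨p, q, rfl, rfl⟩ := hrw.exists_parts
  intro z hz
  rw [ipSemL_append, ipSemL_append] at hz ⊢
  obtain ⟨z1, hz1, z3, hz3, rfl⟩ := Language.mem_mul.mp hz
  obtain ⟨zp, hzp, z2, hz2, rfl⟩ := Language.mem_mul.mp hz1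
  have hz2' : z2 ∈ ipSemL [Symbol.nonterminal r.input] := by
    rw [ipSemL_single]
    exact ruleSound r hr hz2
  exact Language.append_mem_mul (Language.append_mem_mul hzp hz2') hz3

lemma derives_le {u v : List (Symbol Bool IPNT)} (h : ipG.Derives u v) :
    ipSemL v ≤ ipSemL u := by
  induction h with
  | refl => exact le_rfl
  | tail _ hp ih => exact le_trans (produces_le hp) ih

lemma mem_ipSemL_self (w : List Bool) : w ∈ ipSemL (w.map Symbol.terminal) := by
  induction w with
  | nil => exact Language.nil_mem_one
  | cons b w ih =>
    rw [List.map_cons, ipSemL_cons]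
    exact Language.append_mem_mul (show [b] ∈ ipSem (Symbol.terminal b) from rfl) ih

lemma lang_le_IPstar : ipG.language ≤ IPstar := by
  intro w hw
  have h := derives_le hw (mem_ipSemL_self w)
  rwa [ipSemL_single] at h

lemma rule_mem {r : ContextFreeRule Bool IPNT} (hr : r ∈ ipRules) : r ∈ ipG.rules :=
  List.mem_toFinset.mpr hr

lemma derives_sandwich {a b : Bool} {N N' : IPNT}
    (hrule : (⟨N, [.terminal a, .nonterminal N', .terminal b]⟩ :
      ContextFreeRule Bool IPNT) ∈ ipG.rules)
    {w : List Bool} (hw : ipG.Derives [.nonterminal N'] (w.map .terminal)) :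
    ipG.Derives [.nonterminal N] ((a :: (w ++ [b])).map .terminal) := by
  have step : ipG.Produces [Symbol.nonterminal N]
      [.terminal a, .nonterminal N', .terminal b] :=
    ⟨_, hrule, ContextFreeRule.Rewrites.input_output⟩
  refine step.trans_derives ?_
  have h2 := (hw.append_left [Symbol.terminal a]).append_right [Symbol.terminal b]
  simpa using h2

lemma derives_middle : ∀ (n : ℕ) (x y : List Bool), x.length = n → y.length = n →
    (innerProd x.reverse y % 2 = 0 →
      ipG.Derives [Symbol.nonterminal .E] ((x ++ y).map Symbol.terminal)) ∧
    (innerProd x.reverse y % 2 = 1 →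
      ipG.Derives [Symbol.nonterminal .O] ((x ++ y).map Symbol.terminal)) := by
  intro n
  induction n with
  | zero =>
    intro x y hx hy
    rw [List.length_eq_zero_iff] at hx hy
    subst hx; subst hy
    constructor
    · intro _
      have step : ipG.Produces [Symbol.nonterminal IPNT.E] [] :=
        ⟨⟨.E, []⟩, rule_mem (by simp [ipRules]), ContextFreeRule.Rewrites.input_output⟩
      simpa using step.single
    · intro h
      simp [innerProd_nil'] at h
  | succ n ih =>
    intro x y hx hy
    cases x with
    | nil => simp at hx
    | cons a x' =>
      obtain ⟨y', b, rfl⟩ : ∃ y' b, y = y' ++ [b] := by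
        cases hyr : y.reverse with
        | nil => rw [List.reverse_eq_nil_iff] at hyr; subst hyr; simp at hy
        | cons b t => exact ⟨t.reverse, b, by rw [← List.reverse_reverse y, hyr]; simp⟩
      have hx' : x'.length = n := by simpa using hx
      have hy' : y'.length = n := by simp at hy; omega
      have hlen' : x'.length = y'.length := by omega
      have hpar := innerProd_rev_cons_snoc a b x' y' hlen'
      have hword : (a :: x') ++ (y' ++ [b]) = a :: ((x' ++ y') ++ [b]) := by simp
      constructor
      · intro h0
        rw [hpar] at h0
        rw [hword]
        by_cases hab : (a && b) = true
        · rw [hab] at h0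
          simp only [if_true] at h0
          have hinner : innerProd x'.reverse y' % 2 = 1 := by omega
          have hder := (ih x' y' hx' hy').2 hinner
          obtain ⟨rfl, rfl⟩ := Bool.and_eq_true a b |>.mp hab
          exact derives_sandwich (rule_mem (by simp [ipRules])) hder
        · rw [Bool.not_eq_true] at hab
          rw [hab] at h0
          simp only [if_false, Nat.add_zero, Bool.false_eq_true] at h0
          have hder := (ih x' y' hx' hy').1 h0
          refine derives_sandwich (N := IPNT.E) (N' := IPNT.E) ?_ hder
          cases a <;> cases b <;> simp_all [ipRules, rule_mem, List.mem_toFinset, ipG]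
      · intro h0
        rw [hpar] at h0
        rw [hword]
        by_cases hab : (a && b) = true
        · rw [hab] at h0
          simp only [if_true] at h0
          have hinner : innerProd x'.reverse y' % 2 = 0 := by omega
          have hder := (ih x' y' hx' hy').1 hinner
          obtain ⟨rfl, rfl⟩ := Bool.and_eq_true a b |>.mp hab
          exact derives_sandwich (rule_mem (by simp [ipRules])) hder
        · rw [Bool.not_eq_true] at hab
          rw [hab] at h0
          simp only [if_false, Nat.add_zero, Bool.false_eq_true] at h0
          have hder := (ih x' y' hx' hy').2 h0
          refine derives_sandwich (N := IPNT.O) (N' := IPNT.O) ?_ hder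
          cases a <;> cases b <;> simp_all [ipRules, rule_mem, List.mem_toFinset, ipG]

lemma IPstar_le_lang : IPstar ≤ ipG.language := by
  rintro z ⟨a, x, y, ha, rfl, hlen, hpar⟩
  have hE := (derives_middle y.length x y hlen rfl).1 hpar
  refine (ContextFreeGrammar.mem_language_iff _ _).mpr ?_
  rcases ha with rfl | rfl | rfl
  · simp only [List.nil_append]
    have step : ipG.Produces [Symbol.nonterminal ipG.initial] [Symbol.nonterminal IPNT.E] :=
      ⟨⟨.S, [.nonterminal .E]⟩, rule_mem (by simp [ipRules]),
        ContextFreeRule.Rewrites.input_output⟩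
    exact step.trans_derives hE
  · have step : ipG.Produces [Symbol.nonterminal ipG.initial]
        [Symbol.terminal false, Symbol.nonterminal IPNT.E] :=
      ⟨⟨.S, [.terminal false, .nonterminal .E]⟩, rule_mem (by simp [ipRules]),
        ContextFreeRule.Rewrites.input_output⟩
    refine step.trans_derives ?_
    have h2 := hE.append_left [Symbol.terminal false]
    simpa using h2
  · have step : ipG.Produces [Symbol.nonterminal ipG.initial]
        [Symbol.terminal true, Symbol.nonterminal IPNT.E] :=
      ⟨⟨.S, [.terminal true, .nonterminal .E]⟩, rule_mem (by simp [ipRules]),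
        ContextFreeRule.Rewrites.input_output⟩
    refine step.trans_derives ?_
    have h2 := hE.append_left [Symbol.terminal true]
    simpa using h2

theorem IPstar_isContextFree : IPstar.IsContextFree :=
  ⟨ipG, le_antisymm lang_le_IPstar IPstar_le_lang⟩

end Part1


/-! ### Auxiliary lemmas for the 1PLIN/lin lower bound -/

section Part2

namespace PFA

variable {Λ : Type} (M : PFA Λ)

lemma foldl_vecMul (l : List Λ) (v : M.Q → ℚ) :
    letI := M.fin
    letI := M.dec
    l.foldl (fun v σ => Matrix.vecMul v (M.mat σ)) v
      = Matrix.vecMul v (l.map M.mat).prod := by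
  letI := M.fin
  letI := M.dec
  induction l generalizing v with
  | nil => simp
  | cons a l ih =>
    simp only [List.foldl_cons, List.map_cons, List.prod_cons, ih,
      Matrix.vecMul_vecMul]

lemma accProb_split (l1 l2 : List Λ) :
    letI := M.fin
    letI := M.dec
    M.accProb (l1 ++ l2)
      = dotProduct
          (Matrix.vecMul (Matrix.vecMul (Pi.single M.start 1) M.matC)
            (l1.map M.mat).prod)
          (fun q => ∑ f ∈ M.final, ((l2.map M.mat).prod * M.matD) q f) := by
  letI := M.fin
  letI := M.dec
  set v0 : M.Q → ℚ := Matrix.vecMul (Pi.single M.start 1) M.matC with hv0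
  have h1 : (l1 ++ l2).foldl (fun v σ => Matrix.vecMul v (M.mat σ)) v0
      = Matrix.vecMul v0 ((l1.map M.mat).prod * (l2.map M.mat).prod) := by
    rw [List.foldl_append, M.foldl_vecMul, M.foldl_vecMul, Matrix.vecMul_vecMul]
  unfold PFA.accProb
  rw [h1]
  set w : M.Q → ℚ := Matrix.vecMul v0 (l1.map M.mat).prod with hw
  have h2 : Matrix.vecMul (Matrix.vecMul v0 ((l1.map M.mat).prod * (l2.map M.mat).prod)) M.matD
      = Matrix.vecMul w ((l2.map M.mat).prod * M.matD) := by
    rw [← Matrix.vecMul_vecMul, ← Matrix.vecMul_vecMul]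
  rw [h2]
  -- now: ∑ f ∈ final, (w ᵥ* A) f = w ⬝ᵥ fun q => ∑ f ∈ final, A q f
  set A := (l2.map M.mat).prod * M.matD with hA
  simp only [Matrix.vecMul, dotProduct]
  rw [Finset.sum_comm]
  exact Finset.sum_congr rfl fun q _ => by rw [Finset.mul_sum]

end PFA

lemma innerProd_nil : innerProd [] [] = 0 := rfl

lemma innerProd_cons (a b : Bool) (x y : List Bool) :
    innerProd (a :: x) (b :: y) = (if a && b then 1 else 0) + innerProd x y := by
  simp only [innerProd, List.zip_cons_cons, List.filter_cons]
  cases h : (a && b) <;> simp [h, Nat.add_comm]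

lemma innerProd_ofFn {m : ℕ} (f g : Fin m → Bool) :
    innerProd (List.ofFn f) (List.ofFn g)
      = ∑ j : Fin m, (if f j && g j then 1 else 0) := by
  induction m with
  | zero => simp [innerProd_nil]
  | succ n ih =>
    rw [List.ofFn_succ, List.ofFn_succ, innerProd_cons, Fin.sum_univ_succ, ih]

lemma innerProd_indicator {m : ℕ} (i : Fin m) (g : Fin m → Bool) :
    innerProd (List.ofFn fun j => decide (j = i)) (List.ofFn g)
      = if g i then 1 else 0 := by
  rw [innerProd_ofFn]
  rw [Finset.sum_eq_single i]
  · simp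
  · intro b _ hb
    simp [hb]
  · intro h
    exact absurd (Finset.mem_univ i) h

/-- For `x, y` of equal length, membership of `x ++ y` in `IPstar` is just the parity test. -/
lemma mem_IPstar_append {x y : List Bool} (hxy : x.length = y.length) :
    x ++ y ∈ IPstar ↔ innerProd x.reverse y % 2 = 0 := by
  constructor
  · rintro ⟨a, x', y', ha, heq, hlen, hpar⟩
    have hL := congrArg List.length heq
    simp only [List.length_append] at hL
    rcases ha with rfl | rfl | rfl
    · simp only [List.length_nil] at hL
      simp only [List.nil_append] at heq
      have hx : x.length = x'.length := by omega
      obtain ⟨rfl, rfl⟩ := List.append_inj heq hx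
      exact hpar
    · simp only [List.length_cons, List.length_nil] at hL; omega
    · simp only [List.length_cons, List.length_nil] at hL; omega
  · intro hpar
    exact ⟨[], x, y, Or.inl rfl, rfl, hxy, hpar⟩

theorem IPstar_not_inOnePLin : ¬ InOnePLin IPstar := by
  rintro ⟨Γ, iΓ, h, hlen, M, hM⟩
  letI := M.fin
  letI := M.dec
  set d := Fintype.card M.Q with hd
  set m := d + 2 with hm
  set g := h (2 * m) with hgdef
  have hg : g.length = 2 * m := hlen _
  set g1 := g.take m with hg1
  set g2 := g.drop m with hg2
  have hg1len : g1.length = m := by simp [hg1, hg]; omega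
  have hgsplit : g = g1 ++ g2 := (List.take_append_drop m g).symm
  -- the prefix strings
  set u : Fin m → List Bool := fun i => (List.ofFn fun j => decide (j = i)).reverse with hu
  have hulen : ∀ i, (u i).length = m := by intro i; simp [hu]; omega
  -- state distribution after reading prefix
  set α : Fin m → (M.Q → ℚ) := fun i =>
    Matrix.vecMul (Matrix.vecMul (Pi.single M.start 1) M.matC)
      (((u i).zip g1).map M.mat).prod with hα
  -- the augmented family is linearly dependent
  have hnli : ¬ LinearIndependent ℚ (fun i : Fin m => (α i, (1 : ℚ))) := by
    intro hli
    have hcard := hli.fintype_card_le_finrank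
    have hfr : Module.finrank ℚ ((M.Q → ℚ) × ℚ) = d + 1 := by
      simp [Module.finrank_prod, Module.finrank_pi, hd]
    rw [hfr, Fintype.card_fin] at hcard
    omega
  obtain ⟨c, hc0, i0, hci0⟩ := Fintype.not_linearIndependent_iff.mp hnli
  have hsum : ∑ i, c i = 0 := by
    have h2 := congrArg Prod.snd hc0
    simpa [Prod.snd_sum, Prod.smul_snd, smul_eq_mul] using h2
  have hvec : ∑ i, c i • α i = 0 := by
    have h2 := congrArg Prod.fst hc0
    simpa [Prod.fst_sum, Prod.smul_fst] using h2
  have hpos : ∃ i ∈ Finset.univ, 0 < c i := by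
    refine Finset.exists_pos_of_sum_zero_of_exists_nonzero c hsum ⟨i0, Finset.mem_univ i0, hci0⟩
  obtain ⟨ip, _, hip⟩ := hpos
  -- the suffix string
  set v : List Bool := List.ofFn (fun j : Fin m => decide (¬ 0 < c j)) with hv
  have hvlen : v.length = m := by simp [hv]; omega
  set β : M.Q → ℚ := fun q => ∑ f ∈ M.final, (((v.zip g2).map M.mat).prod * M.matD) q f with hβ
  -- key: for each i, ip membership iff dot product big
  have key : ∀ i : Fin m, (0 < c i) ↔ 1 / 2 < dotProduct (α i) β := by
    intro i
    have hxlen : (u i ++ v).length = 2 * m := by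
      simp [hulen i, hvlen]; omega
    have hmem : (u i ++ v) ∈ IPstar ↔ 0 < c i := by
      rw [mem_IPstar_append (by rw [hulen i, hvlen])]
      have : (u i).reverse = List.ofFn fun j => decide (j = i) := by simp [hu]
      rw [this, hv, innerProd_indicator]
      by_cases hc : 0 < c i <;> simp [hc]
    have hacc : M.accProb ((u i ++ v).zip (h (u i ++ v).length))
        = dotProduct (α i) β := by
      rw [hxlen, ← hgdef, hgsplit, List.zip_append (by rw [hulen i, hg1len]),
        M.accProb_split]
    rw [← hmem, ← hacc]
    exact hM (u i ++ v)
  -- derive the contradiction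
  have hdot0 : ∑ i, c i * dotProduct (α i) β = 0 := by
    have h1 : ∑ i, c i * dotProduct (α i) β
        = dotProduct (∑ i, c i • α i) β := by
      simp only [dotProduct, Finset.sum_apply, Pi.smul_apply, smul_eq_mul,
        Finset.sum_mul, Finset.mul_sum]
      rw [Finset.sum_comm]
      exact Finset.sum_congr rfl fun i _ => Finset.sum_congr rfl fun q _ => (mul_assoc _ _ _).symm
    rw [h1, hvec, zero_dotProduct]
  have hlt : ∑ i, c i * (1 / 2 : ℚ) < ∑ i, c i * dotProduct (α i) β := by
    apply Finset.sum_lt_sum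
    · intro i _
      by_cases hc : 0 < c i
      · exact le_of_lt (by
          have := (key i).mp hc
          exact mul_lt_mul_of_pos_left this hc)
      · have hub : ¬ 1 / 2 < dotProduct (α i) β := fun hgt => hc ((key i).mpr hgt)
        push_neg at hc hub
        exact mul_le_mul_of_nonpos_left hub hc
    · exact ⟨ip, Finset.mem_univ ip, mul_lt_mul_of_pos_left ((key ip).mp hip) hip⟩
  rw [hdot0, ← Finset.sum_mul, hsum, zero_mul] at hlt
  exact absurd hlt (lt_irrefl 0)

end Part2


theorem stmt6 : IPstar.IsContextFree ∧ ¬ InOnePLin IPstar := by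
  exact ⟨IPstar_isContextFree, IPstar_not_inOnePLin⟩
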